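/- Let N, s ∈ ℕ, Δt > 0, and let D, D₊, D₋ ∈ ℝ^{N×N}. Let Ã, A ∈ ℝ^{s×s} and b̃, b ∈ ℝ^s be ImEx Butcher data of type II: the first rows of Ã and A are zero, and the lower-right submatrix = (aᵢⱼ)₂≤ᵢ,ⱼ≤s is invertible. Assume the method is globally stiffly accurate: ã_{sj} = b̃ⱼ and a_{sj} = bⱼ for all j. Define f(u) = −(1/3)(D(u∘u) + u∘(Du)). Fix uⁿ ∈ ℝ^N with well-prepared data vⁿ = D₋uⁿ and wⁿ = D D₋uⁿ. For each τ > 0 let stages Uᵢ(τ), Vᵢ(τ), Wᵢ(τ) satisfy U₁(τ) = uⁿ, V₁(τ) = vⁿ, W₁(τ) = wⁿ, and for i ≥ 2: Uᵢ(τ) = uⁿ + Δt·Σⱼ ãᵢⱼ f(Uⱼ(τ)) − Δt·Σⱼ aᵢⱼ D₊Wⱼ(τ), Vᵢ(τ) = vⁿ + (Δt/τ)·Σⱼ aᵢⱼ (DVⱼ(τ) − Wⱼ(τ)), Wᵢ(τ) = wⁿ + (Δt/τ)·Σⱼ aᵢⱼ (Vⱼ(τ) − D₋Uⱼ(τ)).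 Assume that as τ → 0⁺, Uᵢ(τ) → Uᵢ⁰, Vᵢ(τ) → Vᵢ⁰, Wᵢ(τ) → Wᵢ⁰ for each i. Then: (1) Vⱼ⁰ = D₋Uⱼ⁰ and Wⱼ⁰ = D Vⱼ⁰ for all j; (2) Uᵢ⁰ = uⁿ + Δt·Σⱼ ãᵢⱼ f(Uⱼ⁰) − Δt·Σⱼ aᵢⱼ D₊DD₋Uⱼ⁰ for all i, i.e., the limit stages satisfy the same ImEx method applied to the semidiscrete KdV equation; and (3) the updates converge with lim uⁿ⁺¹(τ) = U_s⁰, lim vⁿ⁺¹(τ) = D₋U_s⁰, and lim wⁿ⁺¹(τ) = D D₋U_s⁰, so the method is asymptotic-preserving for all components u, v, and w. -/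

import Mathlib

open Filter Matrix

private lemma cont_mulVec {N : ℕ} (M : Matrix (Fin N) (Fin N) ℝ) :
    Continuous fun v : Fin N → ℝ => M.mulVec v := by
  apply continuous_pi; intro i
  simpa [Matrix.mulVec, dotProduct] using
    continuous_finset_sum (Finset.univ) fun j _ => (continuous_const.mul (continuous_apply j) : Continuous fun v : Fin N → ℝ => M i j * v j)

private lemma vec_eq_zero {n : ℕ} {M : Matrix (Fin n) (Fin n) ℝ} (hM : IsUnit M)
    {v : Fin n → ℝ} (hv : M.mulVec v = 0) : v = 0 := by
  have hdet := (Matrix.isUnit_iff_isUnit_det M).mp hM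
  calc v = (M⁻¹ * M).mulVec v := by rw [Matrix.nonsing_inv_mul M hdet, Matrix.one_mulVec]
    _ = M⁻¹.mulVec (M.mulVec v) := by rw [← Matrix.mulVec_mulVec]
    _ = 0 := by rw [hv, Matrix.mulVec_zero]

private lemma sum_split {s : ℕ} (hs : 0 < s) (g : Fin s → ℝ) :
    ∑ j, g j = g ⟨0, hs⟩ + ∑ j : Fin (s - 1), g ⟨j.1 + 1, by omega⟩ := by
  have h : s - 1 + 1 = s := by omega
  rw [← (finCongr h).sum_comp g, Fin.sum_univ_succ]
  refine congrArg₂ (· + ·) (congrArg g (Fin.ext (by simp))) ?_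
  apply Finset.sum_congr rfl
  intro j _
  exact congrArg g (Fin.ext (by simp [finCongr]))

private lemma solve_stages {s : ℕ} (hs : 0 < s) (A : Matrix (Fin s) (Fin s) ℝ)
    (hAhat : IsUnit (Matrix.of fun i j : Fin (s - 1) =>
      A ⟨i.1 + 1, by omega⟩ ⟨j.1 + 1, by omega⟩))
    (x : Fin s → ℝ) (hx0 : x ⟨0, hs⟩ = 0)
    (hkey : ∀ i : Fin s, 0 < i.1 → ∑ j, A i j * x j = 0) :
    ∀ j, x j = 0 := by
  have hmv : (Matrix.of fun i j : Fin (s - 1) =>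
      A ⟨i.1 + 1, by omega⟩ ⟨j.1 + 1, by omega⟩).mulVec
        (fun j : Fin (s - 1) => x ⟨j.1 + 1, by omega⟩) = 0 := by
    funext i
    have hk := hkey ⟨i.1 + 1, by omega⟩ (Nat.succ_pos _)
    rw [sum_split hs] at hk
    rw [hx0, mul_zero, zero_add] at hk
    simpa [Matrix.mulVec, dotProduct] using hk
  have hz := vec_eq_zero hAhat hmv
  intro j
  rcases Nat.eq_zero_or_pos j.1 with h0 | h1
  · have hj : j = ⟨0, hs⟩ := Fin.ext h0
    rw [hj]; exact hx0
  · have hj : j.1 - 1 < s - 1 := by omega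
    have := congrFun hz ⟨j.1 - 1, hj⟩
    have hjj : (⟨(j.1 - 1) + 1, by omega⟩ : Fin s) = j := Fin.ext (by simp; omega)
    simpa [hjj] using this


/-- Asymptotic preservation of globally stiffly accurate type II ImEx Runge–Kutta
methods (first tableau rows zero, lower-right implicit submatrix invertible) applied
to the split semidiscrete KdVH system with well-prepared initial data
`vⁿ = D₋uⁿ`, `wⁿ = DD₋uⁿ`: the stage limits satisfy `V⁰ = D₋U⁰`, `W⁰ = DV⁰`, the
limit stages solve the same ImEx method applied to the semidiscrete KdV equation, and
the updates converge to `U_s⁰`, `D₋U_s⁰`, `DD₋U_s⁰` respectively, so the method is AP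
for all components. -/
theorem imex_typeII_gsa_asymptotic_preserving (N s : ℕ) (hs : 0 < s)
    (Δt : ℝ) (hΔt : 0 < Δt)
    (D Dp Dm : Matrix (Fin N) (Fin N) ℝ)
    (Ae A : Matrix (Fin s) (Fin s) ℝ) (be b : Fin s → ℝ)
    (hrow1 : ∀ j : Fin s, Ae ⟨0, hs⟩ j = 0 ∧ A ⟨0, hs⟩ j = 0)
    (hAhat : IsUnit (Matrix.of fun i j : Fin (s - 1) =>
      A ⟨i.1 + 1, by have := i.2; omega⟩ ⟨j.1 + 1, by have := j.2; omega⟩))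
    (hGSA : ∀ j : Fin s, Ae ⟨s - 1, by omega⟩ j = be j ∧ A ⟨s - 1, by omega⟩ j = b j)
    (f : (Fin N → ℝ) → (Fin N → ℝ))
    (hf : ∀ u : Fin N → ℝ, f u = -(1/3 : ℝ) • (D.mulVec (u * u) + u * D.mulVec u))
    (un vn wn : Fin N → ℝ)
    (hvn : vn = Dm.mulVec un) (hwn : wn = D.mulVec (Dm.mulVec un))
    (U V W : ℝ → Fin s → Fin N → ℝ)
    (U0 V0 W0 : Fin s → Fin N → ℝ)
    (hfirst : ∀ τ : ℝ, 0 < τ →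
      U τ ⟨0, hs⟩ = un ∧ V τ ⟨0, hs⟩ = vn ∧ W τ ⟨0, hs⟩ = wn)
    (hUeq : ∀ τ : ℝ, 0 < τ → ∀ i : Fin s, 0 < i.1 →
      U τ i = un + Δt • (∑ j, Ae i j • f (U τ j))
        - Δt • (∑ j, A i j • Dp.mulVec (W τ j)))
    (hVeq : ∀ τ : ℝ, 0 < τ → ∀ i : Fin s, 0 < i.1 →
      V τ i = vn + (Δt / τ) • (∑ j, A i j • (D.mulVec (V τ j) - W τ j)))
    (hWeq : ∀ τ : ℝ, 0 < τ → ∀ i : Fin s, 0 < i.1 →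
      W τ i = wn + (Δt / τ) • (∑ j, A i j • (V τ j - Dm.mulVec (U τ j))))
    (hUlim : ∀ i, Tendsto (fun τ => U τ i) (nhdsWithin 0 (Set.Ioi 0)) (nhds (U0 i)))
    (hVlim : ∀ i, Tendsto (fun τ => V τ i) (nhdsWithin 0 (Set.Ioi 0)) (nhds (V0 i)))
    (hWlim : ∀ i, Tendsto (fun τ => W τ i) (nhdsWithin 0 (Set.Ioi 0)) (nhds (W0 i))) :
    (∀ j, V0 j = Dm.mulVec (U0 j) ∧ W0 j = D.mulVec (V0 j)) ∧
    (∀ i, U0 i = un + Δt • (∑ j, Ae i j • f (U0 j))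
      - Δt • (∑ j, A i j • (Dp * D * Dm).mulVec (U0 j))) ∧
    Tendsto
      (fun τ => un + Δt • (∑ j, be j • f (U τ j)) - Δt • (∑ j, b j • Dp.mulVec (W τ j)))
      (nhdsWithin 0 (Set.Ioi 0)) (nhds (U0 ⟨s - 1, by omega⟩)) ∧
    Tendsto (fun τ => vn + (Δt / τ) • (∑ j, b j • (D.mulVec (V τ j) - W τ j)))
      (nhdsWithin 0 (Set.Ioi 0)) (nhds (Dm.mulVec (U0 ⟨s - 1, by omega⟩))) ∧
    Tendsto (fun τ => wn + (Δt / τ) • (∑ j, b j • (V τ j - Dm.mulVec (U τ j))))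
      (nhdsWithin 0 (Set.Ioi 0)) (nhds (D.mulVec (Dm.mulVec (U0 ⟨s - 1, by omega⟩)))) := by

  have hne : (nhdsWithin (0:ℝ) (Set.Ioi 0)).NeBot := inferInstance
  have hev : ∀ᶠ τ in nhdsWithin (0:ℝ) (Set.Ioi 0), 0 < τ := self_mem_nhdsWithin
  -- limits of the first stage
  have hU0 : U0 ⟨0, hs⟩ = un :=
    tendsto_nhds_unique (hUlim _)
      (tendsto_const_nhds.congr' (hev.mono fun τ hτ => ((hfirst τ hτ).1).symm))
  have hV0 : V0 ⟨0, hs⟩ = vn :=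
    tendsto_nhds_unique (hVlim _)
      (tendsto_const_nhds.congr' (hev.mono fun τ hτ => ((hfirst τ hτ).2.1).symm))
  have hW0 : W0 ⟨0, hs⟩ = wn :=
    tendsto_nhds_unique (hWlim _)
      (tendsto_const_nhds.congr' (hev.mono fun τ hτ => ((hfirst τ hτ).2.2).symm))
  have htau : Tendsto (fun τ : ℝ => τ) (nhdsWithin 0 (Set.Ioi 0)) (nhds 0) :=
    tendsto_id.mono_right nhdsWithin_le_nhds
  -- limit relaxation identities
  have keyV : ∀ i : Fin s, 0 < i.1 →
      ∑ j, A i j • (D.mulVec (V0 j) - W0 j) = 0 := by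
    intro i hi
    have h1 : Tendsto (fun τ => Δt • ∑ j, A i j • (D.mulVec (V τ j) - W τ j))
        (nhdsWithin 0 (Set.Ioi 0))
        (nhds (Δt • ∑ j, A i j • (D.mulVec (V0 j) - W0 j))) :=
      (tendsto_finset_sum _ fun j _ =>
        ((((cont_mulVec D).tendsto _).comp (hVlim j)).sub (hWlim j)).const_smul
          (A i j)).const_smul Δt
    have h2 : Tendsto (fun τ => τ • (V τ i - vn)) (nhdsWithin 0 (Set.Ioi 0))
        (nhds 0) := by
      have := htau.smul ((hVlim i).sub (tendsto_const_nhds : Tendsto _ (nhdsWithin (0:ℝ) (Set.Ioi 0)) (nhds vn)))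
      simpa using this
    have heq : (fun τ => Δt • ∑ j, A i j • (D.mulVec (V τ j) - W τ j))
        =ᶠ[nhdsWithin (0:ℝ) (Set.Ioi 0)] fun τ => τ • (V τ i - vn) := by
      filter_upwards [hev] with τ hτ
      rw [hVeq τ hτ i hi, add_sub_cancel_left, smul_smul, mul_comm,
        div_mul_cancel₀ Δt hτ.ne']
    have h0 : Δt • ∑ j, A i j • (D.mulVec (V0 j) - W0 j) = 0 :=
      tendsto_nhds_unique (h1.congr' heq) h2
    rcases smul_eq_zero.mp h0 with h | h
    · exact absurd h hΔt.ne'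
    · exact h
  have keyW : ∀ i : Fin s, 0 < i.1 →
      ∑ j, A i j • (V0 j - Dm.mulVec (U0 j)) = 0 := by
    intro i hi
    have h1 : Tendsto (fun τ => Δt • ∑ j, A i j • (V τ j - Dm.mulVec (U τ j)))
        (nhdsWithin 0 (Set.Ioi 0))
        (nhds (Δt • ∑ j, A i j • (V0 j - Dm.mulVec (U0 j)))) :=
      (tendsto_finset_sum _ fun j _ =>
        ((hVlim j).sub (((cont_mulVec Dm).tendsto _).comp (hUlim j))).const_smul
          (A i j)).const_smul Δt
    have h2 : Tendsto (fun τ => τ • (W τ i - wn)) (nhdsWithin 0 (Set.Ioi 0))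
        (nhds 0) := by
      have := htau.smul ((hWlim i).sub (tendsto_const_nhds : Tendsto _ (nhdsWithin (0:ℝ) (Set.Ioi 0)) (nhds wn)))
      simpa using this
    have heq : (fun τ => Δt • ∑ j, A i j • (V τ j - Dm.mulVec (U τ j)))
        =ᶠ[nhdsWithin (0:ℝ) (Set.Ioi 0)] fun τ => τ • (W τ i - wn) := by
      filter_upwards [hev] with τ hτ
      rw [hWeq τ hτ i hi, add_sub_cancel_left, smul_smul, mul_comm,
        div_mul_cancel₀ Δt hτ.ne']
    have h0 : Δt • ∑ j, A i j • (V0 j - Dm.mulVec (U0 j)) = 0 :=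
      tendsto_nhds_unique (h1.congr' heq) h2
    rcases smul_eq_zero.mp h0 with h | h
    · exact absurd h hΔt.ne'
    · exact h
  -- solve for the stage limits
  have hAhat' : IsUnit (Matrix.of fun i j : Fin (s - 1) =>
      A ⟨i.1 + 1, by omega⟩ ⟨j.1 + 1, by omega⟩) := hAhat
  have hx : ∀ j, D.mulVec (V0 j) - W0 j = 0 := by
    intro j
    funext k
    have h0 : (D.mulVec (V0 ⟨0, hs⟩) - W0 ⟨0, hs⟩) k = 0 := by
      rw [hV0, hW0, hvn, hwn]; simp
    have := solve_stages hs A hAhat'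
      (fun j => (D.mulVec (V0 j) - W0 j) k) h0
      (fun i hi => by
        have := congrFun (keyV i hi) k
        simpa [Finset.sum_apply] using this) j
    simpa using this
  have hz : ∀ j, V0 j - Dm.mulVec (U0 j) = 0 := by
    intro j
    funext k
    have h0 : (V0 ⟨0, hs⟩ - Dm.mulVec (U0 ⟨0, hs⟩)) k = 0 := by
      rw [hV0, hU0, hvn]; simp
    have := solve_stages hs A hAhat'
      (fun j => (V0 j - Dm.mulVec (U0 j)) k) h0
      (fun i hi => by
        have := congrFun (keyW i hi) k
        simpa [Finset.sum_apply] using this) j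
    simpa using this
  have part1 : ∀ j, V0 j = Dm.mulVec (U0 j) ∧ W0 j = D.mulVec (V0 j) := by
    intro j
    exact ⟨sub_eq_zero.mp (hz j), (sub_eq_zero.mp (hx j)).symm⟩
  -- continuity of f
  have hfc : Continuous f := by
    have hfe : f = fun u => -(1/3 : ℝ) • (D.mulVec (u * u) + u * D.mulVec u) :=
      funext hf
    rw [hfe]
    exact (((cont_mulVec D).comp (continuous_id.mul continuous_id)).add
      (continuous_id.mul (cont_mulVec D))).const_smul (-(1/3 : ℝ))
  -- part 2
  have hW0D : ∀ j, Dp.mulVec (W0 j) = (Dp * D * Dm).mulVec (U0 j) := by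
    intro j
    rw [(part1 j).2, (part1 j).1, Matrix.mulVec_mulVec, Matrix.mulVec_mulVec]
  have part2 : ∀ i, U0 i = un + Δt • (∑ j, Ae i j • f (U0 j))
      - Δt • (∑ j, A i j • (Dp * D * Dm).mulVec (U0 j)) := by
    intro i
    rcases Nat.eq_zero_or_pos i.1 with h0 | hi
    · have hii : i = ⟨0, hs⟩ := Fin.ext h0
      rw [hii, hU0]
      simp [fun j => (hrow1 j).1, fun j => (hrow1 j).2]
    · have hrhs : Tendsto (fun τ => un + Δt • (∑ j, Ae i j • f (U τ j))
          - Δt • (∑ j, A i j • Dp.mulVec (W τ j))) (nhdsWithin 0 (Set.Ioi 0))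
          (nhds (un + Δt • (∑ j, Ae i j • f (U0 j))
            - Δt • (∑ j, A i j • Dp.mulVec (W0 j)))) :=
        ((tendsto_const_nhds.add ((tendsto_finset_sum _ fun j _ =>
          ((hfc.tendsto _).comp (hUlim j)).const_smul _).const_smul Δt)).sub
          ((tendsto_finset_sum _ fun j _ =>
          (((cont_mulVec Dp).tendsto _).comp (hWlim j)).const_smul _).const_smul Δt))
      have hlim : U0 i = un + Δt • (∑ j, Ae i j • f (U0 j))
          - Δt • (∑ j, A i j • Dp.mulVec (W0 j)) :=
        tendsto_nhds_unique (hUlim i)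
          (hrhs.congr' (hev.mono fun τ hτ => (hUeq τ hτ i hi).symm))
      rw [hlim]
      simp only [hW0D]
  refine ⟨part1, part2, ?_, ?_, ?_⟩
  · -- u-update
    have hequpd : ∀ᶠ τ in nhdsWithin (0:ℝ) (Set.Ioi 0),
        U τ ⟨s - 1, by omega⟩ = un + Δt • (∑ j, be j • f (U τ j))
          - Δt • (∑ j, b j • Dp.mulVec (W τ j)) := by
      filter_upwards [hev] with τ hτ
      by_cases hs1 : 1 < s
      · rw [hUeq τ hτ ⟨s - 1, by omega⟩ (by simp; omega)]
        have hbe : ∀ j, be j = Ae ⟨s - 1, by omega⟩ j := fun j => ((hGSA j).1).symm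
        have hb : ∀ j, b j = A ⟨s - 1, by omega⟩ j := fun j => ((hGSA j).2).symm
        simp only [hbe, hb]
      · have hseq : (⟨s - 1, by omega⟩ : Fin s) = ⟨0, hs⟩ := Fin.ext (by omega)
        have hbe0 : ∀ j, be j = 0 := fun j => by
          rw [← (hGSA j).1, hseq, (hrow1 j).1]
        have hb0 : ∀ j, b j = 0 := fun j => by
          rw [← (hGSA j).2, hseq, (hrow1 j).2]
        rw [hseq, (hfirst τ hτ).1]
        simp [hbe0, hb0]
    exact (hUlim _).congr' hequpd
  · -- v-update
    have hequpd : ∀ᶠ τ in nhdsWithin (0:ℝ) (Set.Ioi 0),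
        V τ ⟨s - 1, by omega⟩ = vn + (Δt / τ) • (∑ j, b j • (D.mulVec (V τ j) - W τ j)) := by
      filter_upwards [hev] with τ hτ
      by_cases hs1 : 1 < s
      · rw [hVeq τ hτ ⟨s - 1, by omega⟩ (by simp; omega)]
        have hb : ∀ j, b j = A ⟨s - 1, by omega⟩ j := fun j => ((hGSA j).2).symm
        simp only [hb]
      · have hseq : (⟨s - 1, by omega⟩ : Fin s) = ⟨0, hs⟩ := Fin.ext (by omega)
        have hb0 : ∀ j, b j = 0 := fun j => by
          rw [← (hGSA j).2, hseq, (hrow1 j).2]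
        rw [hseq, (hfirst τ hτ).2.1]
        simp [hb0]
    have : Dm.mulVec (U0 ⟨s - 1, by omega⟩) = V0 ⟨s - 1, by omega⟩ :=
      ((part1 _).1).symm
    rw [this]
    exact (hVlim _).congr' hequpd
  · -- w-update
    have hequpd : ∀ᶠ τ in nhdsWithin (0:ℝ) (Set.Ioi 0),
        W τ ⟨s - 1, by omega⟩ = wn + (Δt / τ) • (∑ j, b j • (V τ j - Dm.mulVec (U τ j))) := by
      filter_upwards [hev] with τ hτ
      by_cases hs1 : 1 < s
      · rw [hWeq τ hτ ⟨s - 1, by omega⟩ (by simp; omega)]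
        have hb : ∀ j, b j = A ⟨s - 1, by omega⟩ j := fun j => ((hGSA j).2).symm
        simp only [hb]
      · have hseq : (⟨s - 1, by omega⟩ : Fin s) = ⟨0, hs⟩ := Fin.ext (by omega)
        have hb0 : ∀ j, b j = 0 := fun j => by
          rw [← (hGSA j).2, hseq, (hrow1 j).2]
        rw [hseq, (hfirst τ hτ).2.2]
        simp [hb0]
    have h1 : D.mulVec (Dm.mulVec (U0 ⟨s - 1, by omega⟩)) = W0 ⟨s - 1, by omega⟩ := by
      rw [(part1 (⟨s - 1, by omega⟩ : Fin s)).2, (part1 (⟨s - 1, by omega⟩ : Fin s)).1]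
    rw [h1]
    exact (hWlim _).congr' hequpd
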